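/- Every compact, connected, locally convex subset of ℝ^m is convex. (Here a set C is locally convex if every point of C has an open neighborhood U in ℝ^m such that C ∩ U is convex.) -/

import Mathlib

open Set Metric

variable {E : Type*} [NormedAddCommGroup E] [InnerProductSpace ℝ E]

lemma TN_arith {u v w : ℝ} (hu0 : 0 ≤ u) (hv0 : 0 ≤ v) (hw0 : 0 ≤ w) (hwuv : w ≤ u + v)
    (hkey : u^2 + v^2 ≤ (u/2 + w/4)^2 + (v/2 + w/4)^2) : u = v ∧ w = u + v := by
  have huv : u = v := by
    have hd2 : (u - v)^2 ≤ 0 := by nlinarith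
    have h1 := sq_nonneg (u - v)
    have h0 : (u - v)^2 = 0 := le_antisymm hd2 h1
    have := pow_eq_zero_iff (two_ne_zero) |>.1 h0
    linarith [sub_eq_zero.1 this]
  have hw2 : u + v ≤ w := by nlinarith
  exact ⟨huv, le_antisymm hwuv hw2⟩

lemma TN_eps {C : Set E} (hcomp : IsCompact C)
    (hloc : ∀ x ∈ C, ∃ U : Set E, IsOpen U ∧ x ∈ U ∧ Convex ℝ (C ∩ U)) :
    ∃ ε > 0, ∀ c ∈ C, Convex ℝ (C ∩ ball c ε) := by
  choose U hUo hUm hUc using hloc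
  obtain ⟨δ, hδ, hball⟩ := lebesgue_number_lemma_of_metric (c := fun c : C => U c.1 c.2)
    hcomp (fun i => hUo i.1 i.2) (fun z hz => mem_iUnion.2 ⟨⟨z, hz⟩, hUm z hz⟩)
  refine ⟨δ, hδ, fun c hc => ?_⟩
  obtain ⟨i, hi⟩ := hball c hc
  have : C ∩ ball c δ = (C ∩ U i.1 i.2) ∩ ball c δ := by
    rw [inter_assoc, inter_eq_self_of_subset_right hi]
  rw [this]
  exact (hUc i.1 i.2).inter (convex_ball c δ)

theorem TN_aux (C : Set E) (hcomp : IsCompact C) (hconn : IsConnected C)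
    (hloc : ∀ x ∈ C, ∃ U : Set E, IsOpen U ∧ x ∈ U ∧ Convex ℝ (C ∩ U)) :
    Convex ℝ C := by
  obtain ⟨ε, hε, hball⟩ := TN_eps hcomp hloc
  have hC_closed : IsClosed C := hcomp.isClosed
  have H1 : ∀ p ∈ C, ∀ q ∈ C, dist p q < ε → segment ℝ p q ⊆ C := by
    intro p hp q hq hpq
    have hpb : p ∈ C ∩ ball p ε := ⟨hp, mem_ball_self hε⟩
    have hqb : q ∈ C ∩ ball p ε := ⟨hq, by rwa [mem_ball, dist_comm]⟩
    exact ((hball p hp).segment_subset hpb hqb).trans inter_subset_left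
  intro x hx y hy a b ha hb hab
  suffices hseg : segment ℝ x y ⊆ C by exact hseg ⟨a, b, ha, hb, hab, rfl⟩
  clear ha hb hab a b
  -- chain relation
  set r : E → E → Prop := fun p q => q ∈ C ∧ segment ℝ p q ⊆ C ∧ dist p q ≤ ε/2 with hr
  have hchain : Relation.ReflTransGen r x y := by
    by_contra hy'
    set A := {z | z ∈ C ∧ Relation.ReflTransGen r x z} with hA
    set U := ⋃ a ∈ A, ball a (ε/4) with hU
    set V := ⋃ b ∈ C \ A, ball b (ε/4) with hV
    have hε4 : (0:ℝ) < ε/4 := by linarith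
    have hUo : IsOpen U := isOpen_biUnion fun _ _ => isOpen_ball
    have hVo : IsOpen V := isOpen_biUnion fun _ _ => isOpen_ball
    have hsub : C ⊆ U ∪ V := by
      intro c hc
      by_cases hcA : c ∈ A
      · exact Or.inl (mem_biUnion hcA (mem_ball_self hε4))
      · exact Or.inr (mem_biUnion ⟨hc, hcA⟩ (mem_ball_self hε4))
    have h1 : (C ∩ U).Nonempty :=
      ⟨x, hx, mem_biUnion ⟨hx, Relation.ReflTransGen.refl⟩ (mem_ball_self hε4)⟩
    have h2 : (C ∩ V).Nonempty :=
      ⟨y, hy, mem_biUnion (show y ∈ C \ A from ⟨hy, fun hyA => hy' hyA.2⟩) (mem_ball_self hε4)⟩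
    obtain ⟨w, hwC, hwU, hwV⟩ := hconn.isPreconnected U V hUo hVo hsub h1 h2
    obtain ⟨p, hpA, hwp⟩ := mem_iUnion₂.1 hwU
    obtain ⟨q, hqCA, hwq⟩ := mem_iUnion₂.1 hwV
    apply hqCA.2
    have hpw : r p w := by
      refine ⟨hwC, H1 p hpA.1 w hwC ?_, ?_⟩
      · rw [dist_comm]; calc dist w p < ε/4 := hwp
          _ < ε := by linarith
      · rw [dist_comm]; linarith [mem_ball.1 hwp]
    have hwq' : r w q := by
      refine ⟨hqCA.1, H1 w hwC q hqCA.1 ?_, ?_⟩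
      · calc dist w q < ε/4 := hwq
          _ < ε := by linarith
      · linarith [mem_ball.1 hwq]
    exact ⟨hqCA.1, (hpA.2.tail hpw).tail hwq'⟩
  -- chain to finite path
  have key : ∀ z, Relation.ReflTransGen r x z → ∃ N : ℕ, ∃ f : ℕ → E,
      f 0 = x ∧ (∀ i, f i ∈ C) ∧ (∀ i, N ≤ i → f i = z) ∧
      ∀ i < N, segment ℝ (f i) (f (i+1)) ⊆ C ∧ dist (f i) (f (i+1)) ≤ ε/2 := by
    intro z hz
    induction hz with
    | refl => exact ⟨0, fun _ => x, rfl, fun _ => hx, fun _ _ => rfl, fun i hi => by omega⟩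
    | @tail b c hxb hbc ih =>
      obtain ⟨N, f, hf0, hfC, hfN, hfseg⟩ := ih
      refine ⟨N+1, fun i => if i ≤ N then f i else c, by simp [hf0], ?_, ?_, ?_⟩
      · intro i
        by_cases h : i ≤ N
        · simpa [h] using hfC i
        · simpa [h] using hbc.1
      · intro i hi
        have h : ¬ i ≤ N := by omega
        simp [h]
      · intro i hi
        rcases Nat.lt_or_ge i N with h | h
        · have h1 : i ≤ N := by omega
          have h2 : i+1 ≤ N := by omega
          simpa [h1, h2] using hfseg i h
        · have hiN : i = N := by omega
          subst hiN
          have h2 : ¬ (i+1 ≤ i) := by omega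
          simp only [le_refl, if_true, h2, if_false]
          rw [hfN i le_rfl]
          exact ⟨hbc.2.1, hbc.2.2⟩
  obtain ⟨N, f₀, hf₀0, hf₀C, hf₀N, hf₀seg⟩ := key y hchain
  clear key hchain
  -- the constraint set of discrete paths
  set S : Set (ℕ → E) := {f | (∀ i, f i ∈ C) ∧ f 0 = x ∧ (∀ i, N ≤ i → f i = y) ∧
    ∀ i < N, (∀ t ∈ Icc (0:ℝ) 1, (1 - t) • f i + t • f (i+1) ∈ C) ∧
      dist (f i) (f (i+1)) ≤ ε/2} with hSdef
  have hsegiff : ∀ p q : E, segment ℝ p q ⊆ C ↔ ∀ t ∈ Icc (0:ℝ) 1, (1 - t) • p + t • q ∈ C := by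
    intro p q
    rw [segment_eq_image, image_subset_iff]
    exact Iff.rfl
  have hf₀S : f₀ ∈ S := by
    refine ⟨hf₀C, hf₀0, hf₀N, fun i hi => ⟨?_, (hf₀seg i hi).2⟩⟩
    exact (hsegiff _ _).1 (hf₀seg i hi).1
  have hSclosed : IsClosed S := by
    have e1 : S = {f : ℕ → E | ∀ i, f i ∈ C} ∩ ({f | f 0 = x} ∩
        ({f | ∀ i, N ≤ i → f i = y} ∩
          {f | ∀ i, i < N → (∀ t ∈ Icc (0:ℝ) 1, (1 - t) • f i + t • f (i+1) ∈ C) ∧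
            dist (f i) (f (i+1)) ≤ ε/2})) := by
      ext f
      simp only [hSdef, mem_inter_iff, mem_setOf_eq]
    rw [e1]
    refine IsClosed.inter ?_ (IsClosed.inter ?_ (IsClosed.inter ?_ ?_))
    · rw [setOf_forall]
      exact isClosed_iInter fun i => hC_closed.preimage (continuous_apply i)
    · exact isClosed_eq (continuous_apply 0) continuous_const
    · rw [setOf_forall]
      refine isClosed_iInter fun i => ?_
      by_cases h : N ≤ i
      · simp only [h, forall_true_left]
        exact isClosed_eq (continuous_apply i) continuous_const
      · simp only [h, false_implies, setOf_true]
        exact isClosed_univ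
    · rw [setOf_forall]
      refine isClosed_iInter fun i => ?_
      by_cases h : i < N
      · simp only [h, forall_true_left]
        have c1 : IsClosed {f : ℕ → E | ∀ t : ℝ, t ∈ Icc (0:ℝ) 1 →
            (1 - t) • f i + t • f (i+1) ∈ C} := by
          rw [setOf_forall]
          refine isClosed_iInter fun t => ?_
          rw [setOf_forall]
          refine isClosed_iInter fun ht => ?_
          exact hC_closed.preimage
            (((continuous_apply i).const_smul (1-t)).add ((continuous_apply (i+1)).const_smul t))
        have c2 : IsClosed {f : ℕ → E | dist (f i) (f (i+1)) ≤ ε/2} :=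
          isClosed_le (Continuous.dist (continuous_apply i) (continuous_apply (i+1)))
            continuous_const
        exact c1.inter c2
      · simp only [h, false_implies, setOf_true]
        exact isClosed_univ
  have hScomp : IsCompact S := by
    have hpi : IsCompact {f : ℕ → E | ∀ i, f i ∈ C} := isCompact_pi_infinite fun i => hcomp
    exact IsCompact.of_isClosed_subset hpi hSclosed fun f hf => hf.1
  set G : (ℕ → E) → ℝ := fun f => ∑ i ∈ Finset.range N, dist (f i) (f (i+1))^2 with hGdef
  have hGc : Continuous G :=
    continuous_finset_sum _ fun i _ =>
      (Continuous.dist (continuous_apply i) (continuous_apply (i+1))).pow 2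
  obtain ⟨g, hgS, hgmin⟩ := hScomp.exists_isMinOn ⟨f₀, hf₀S⟩ hGc.continuousOn
  obtain ⟨gC, g0, gN, gcond⟩ := hgS
  have gseg : ∀ i, i < N → segment ℝ (g i) (g (i+1)) ⊆ C :=
    fun i hi => (hsegiff _ _).2 (gcond i hi).1
  have gdist : ∀ i, i < N → dist (g i) (g (i+1)) ≤ ε/2 := fun i hi => (gcond i hi).2
  -- trivial cases
  rcases Nat.lt_or_ge N 2 with hN2 | hN2
  · interval_cases N
    · have : x = y := by rw [← g0, gN 0 le_rfl]
      rw [← this, segment_same]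
      exact singleton_subset_iff.2 hx
    · have h01 := gseg 0 one_pos
      rwa [g0, gN 1 le_rfl] at h01
  -- key claim: at the minimizer every interior corner is straight with equal arms
  have key2 : ∀ j, j + 2 ≤ N →
      dist (g j) (g (j+1)) = dist (g (j+1)) (g (j+2)) ∧
      dist (g j) (g (j+2)) = dist (g j) (g (j+1)) + dist (g (j+1)) (g (j+2)) := by
    intro j hj
    set u := dist (g j) (g (j+1)) with hu'
    set v := dist (g (j+1)) (g (j+2)) with hv'
    set w := dist (g j) (g (j+2)) with hw'
    have hu2 : u ≤ ε/2 := gdist j (by omega)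
    have hv2 : v ≤ ε/2 := gdist (j+1) (by omega)
    have hwuv : w ≤ u + v := dist_triangle _ _ _
    have hu0 : 0 ≤ u := dist_nonneg
    have hv0 : 0 ≤ v := dist_nonneg
    have hw0 : 0 ≤ w := dist_nonneg
    set A : E := midpoint ℝ (g j) (g (j+1)) with hA'
    set B : E := midpoint ℝ (g (j+1)) (g (j+2)) with hB'
    set z : E := midpoint ℝ A B with hz'
    have hAC : A ∈ C := gseg j (by omega) (midpoint_mem_segment _ _)
    have hBC : B ∈ C := gseg (j+1) (by omega) (midpoint_mem_segment _ _)
    have hAB : dist A B = w / 2 := by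
      have e2 : A - B = (2⁻¹ : ℝ) • (g j - g (j+2)) := by
        rw [hA', hB', midpoint_eq_smul_add, midpoint_eq_smul_add]
        simp only [invOf_eq_inv]
        module
      rw [dist_eq_norm, e2, norm_smul, hw', dist_eq_norm]
      simp [norm_inv]
      ring
    have hjA : dist (g j) A = u / 2 := by
      rw [hA', dist_left_midpoint]
      simp [hu']
      ring
    have hB2 : dist B (g (j+2)) = v / 2 := by
      rw [hB', dist_midpoint_right]
      simp [hv']
      ring
    have hAz : dist A z = w / 4 := by
      rw [hz', dist_left_midpoint, hAB]
      simp
      ring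
    have hzB : dist z B = w / 4 := by
      rw [hz', dist_midpoint_right, hAB]
      simp
      ring
    have hzC : z ∈ C := by
      refine H1 A hAC B hBC ?_ (midpoint_mem_segment _ _)
      rw [hAB]; linarith
    have hgjz : dist (g j) z ≤ u/2 + w/4 := by
      calc dist (g j) z ≤ dist (g j) A + dist A z := dist_triangle _ _ _
        _ = u/2 + w/4 := by rw [hjA, hAz]
    have hzgj2 : dist z (g (j+2)) ≤ v/2 + w/4 := by
      calc dist z (g (j+2)) ≤ dist z B + dist B (g (j+2)) := dist_triangle _ _ _
        _ = v/2 + w/4 := by rw [hzB, hB2]; ring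
    have hgjz2 : dist (g j) z ≤ ε/2 := by linarith
    have hzgj22 : dist z (g (j+2)) ≤ ε/2 := by linarith
    -- the competitor path
    set g' : ℕ → E := fun i => if i = j+1 then z else g i with hg'
    have hg'j : g' j = g j := by simp [hg']
    have hg'j1 : g' (j+1) = z := by simp [hg']
    have hg'j2 : g' (j+2) = g (j+2) := by simp [hg']
    have hg'S : g' ∈ S := by
      refine ⟨?_, ?_, ?_, ?_⟩
      · intro i
        by_cases h : i = j+1
        · simpa [hg', h] using hzC
        · simpa [hg', h] using gC i
      · have : (0:ℕ) ≠ j+1 := by omega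
        simpa [hg', this] using g0
      · intro i hi
        have : i ≠ j+1 := by omega
        simpa [hg', this] using gN i hi
      · intro i hi
        rcases eq_or_ne i j with rfl | hij
        · rw [hg'j, hg'j1]
          constructor
          · exact (hsegiff _ _).1 (H1 (g i) (gC i) z hzC (by linarith))
          · exact hgjz2
        · rcases eq_or_ne i (j+1) with rfl | hij1
          · rw [hg'j1]
            have : g' (j+1+1) = g (j+2) := hg'j2
            rw [this]
            constructor
            · exact (hsegiff _ _).1 (H1 z hzC (g (j+2)) (gC _) (by linarith))
            · exact hzgj22
          · have e3 : g' i = g i := by simp [hg', hij1]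
            have e4 : g' (i+1) = g (i+1) := by
              have : i+1 ≠ j+1 := by omega
              simp [hg', this, hij]
            rw [e3, e4]
            exact gcond i hi
    -- sum comparison
    have hjr : j ∈ Finset.range N := Finset.mem_range.2 (by omega)
    have hj1r : j+1 ∈ (Finset.range N).erase j := by
      rw [Finset.mem_erase]
      exact ⟨by omega, Finset.mem_range.2 (by omega)⟩
    have esum : ∀ h : ℕ → E, ∑ i ∈ Finset.range N, dist (h i) (h (i+1))^2 =
        dist (h j) (h (j+1))^2 + dist (h (j+1)) (h (j+2))^2 +
          ∑ i ∈ ((Finset.range N).erase j).erase (j+1), dist (h i) (h (i+1))^2 := by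
      intro h
      rw [← Finset.add_sum_erase _ _ hjr, ← Finset.add_sum_erase _ _ hj1r]
      ring
    have hrest : ∑ i ∈ ((Finset.range N).erase j).erase (j+1), dist (g' i) (g' (i+1))^2 =
        ∑ i ∈ ((Finset.range N).erase j).erase (j+1), dist (g i) (g (i+1))^2 := by
      refine Finset.sum_congr rfl fun i hi => ?_
      rw [Finset.mem_erase, Finset.mem_erase] at hi
      have e3 : g' i = g i := by simp [hg', hi.1]
      have e4 : g' (i+1) = g (i+1) := by
        have : i+1 ≠ j+1 := by
          intro hc
          exact hi.2.1 (by omega)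
        simp [hg', this, hi.2.1]
      rw [e3, e4]
    have hle := isMinOn_iff.1 hgmin g' hg'S
    rw [hGdef] at hle
    simp only at hle
    rw [esum g, esum g', hrest, hg'j, hg'j1] at hle
    have hg'j2' : g' (j+1+1) = g (j+2) := hg'j2
    rw [hg'j2'] at hle
    have hsum : u^2 + v^2 ≤ dist (g j) z^2 + dist z (g (j+2))^2 := by linarith
    have hq1 : dist (g j) z^2 ≤ (u/2 + w/4)^2 :=
      pow_le_pow_left₀ dist_nonneg hgjz 2
    have hq2 : dist z (g (j+2))^2 ≤ (v/2 + w/4)^2 :=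
      pow_le_pow_left₀ dist_nonneg hzgj2 2
    have hkey : u^2 + v^2 ≤ (u/2 + w/4)^2 + (v/2 + w/4)^2 := by linarith
    obtain ⟨huv, hw2⟩ := TN_arith hu0 hv0 hw0 hwuv hkey
    exact ⟨huv, hw2.symm ▸ rfl⟩
  -- every interior point is the midpoint of its neighbours
  have hmid : ∀ j, j + 2 ≤ N → g (j+1) = midpoint ℝ (g j) (g (j+2)) := by
    intro j hj
    obtain ⟨huv, hw⟩ := key2 j hj
    refine eq_midpoint_of_dist_eq_half ?_ ?_
    · linarith
    · linarith
  -- hence the path lies on a straight line with equal steps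
  have hline : ∀ k, k ≤ N → g k = x + (k:ℝ) • (g 1 - x) := by
    intro k
    induction k using Nat.strong_induction_on with
    | _ k ih =>
      rcases k with _ | _ | m
      · intro _; simp [g0]
      · intro _; simp
      · intro hk
        have h1 := ih m (by omega) (by omega)
        have h2 := ih (m+1) (by omega) (by omega)
        have h3 := hmid m (by omega)
        have h4 : g (m+1) + g (m+1) = g m + g (m+2) := by
          rw [h3, midpoint_add_self]
        have h5 : g (m+2) = g (m+1) + g (m+1) - g m := by
          rw [h4]; abel
        rw [h5, h1, h2]
        push_cast
        module
  have hy2 : y = x + (N:ℝ) • (g 1 - x) := by rw [← gN N le_rfl, hline N le_rfl]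
  -- finish: every point of the segment lies on one of the substeps
  intro p hp
  obtain ⟨a, b, ha, hb, hab, rfl⟩ := hp
  have hN0 : (0:ℝ) < (N:ℝ) := by
    have : (0:ℕ) < N := by omega
    exact_mod_cast this
  set s : ℝ := b * N with hs
  have hs0 : 0 ≤ s := mul_nonneg hb hN0.le
  have hsN : s ≤ (N:ℝ) := by
    have : b * (N:ℝ) ≤ 1 * (N:ℝ) := mul_le_mul_of_nonneg_right (by linarith) hN0.le
    rw [one_mul] at this
    exact this
  set k : ℕ := min ⌊s⌋₊ (N-1) with hk
  have hkN : k + 1 ≤ N := by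
    have : k ≤ N - 1 := min_le_right _ _
    omega
  have hks : (k:ℝ) ≤ s := by
    have h1 : (k:ℝ) ≤ (⌊s⌋₊ : ℝ) := by exact_mod_cast min_le_left _ _
    exact h1.trans (Nat.floor_le hs0)
  have hsk1 : s ≤ (k:ℝ) + 1 := by
    rcases le_or_gt (⌊s⌋₊) (N-1) with h | h
    · have hkf : k = ⌊s⌋₊ := min_eq_left h
      rw [hkf]
      exact (Nat.lt_floor_add_one s).le
    · have hk' : k = N - 1 := min_eq_right h.le
      rw [hk']
      have hcast : ((N-1:ℕ):ℝ) + 1 = (N:ℝ) := by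
        have h1 : (1:ℕ) ≤ N := by omega
        rw [Nat.cast_sub h1]
        push_cast
        ring
      rw [hcast]
      exact hsN
  refine gseg k (by omega) ?_
  refine ⟨1 - (s - k), s - k, by linarith, by linarith, by ring, ?_⟩
  rw [hline k (by omega), hline (k+1) (by omega)]
  have hax : a = 1 - b := by linarith
  rw [hax, hy2, hs]
  push_cast
  module

theorem compact_connected_locallyConvex_is_convex
    (m : ℕ) (C : Set (Fin m → ℝ))
    (hcomp : IsCompact C) (hconn : IsConnected C)
    (hloc : ∀ x ∈ C, ∃ U : Set (Fin m → ℝ), IsOpen U ∧ x ∈ U ∧ Convex ℝ (C ∩ U)) :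
    Convex ℝ C := by
  set φ : EuclideanSpace ℝ (Fin m) ≃L[ℝ] (Fin m → ℝ) := EuclideanSpace.equiv (Fin m) ℝ
  set C' : Set (EuclideanSpace ℝ (Fin m)) := ⇑φ ⁻¹' C with hC'
  have himg : ⇑φ.symm '' C = C' := by
    rw [hC']; ext z; simp [Set.mem_image]
    constructor
    · rintro ⟨a, ha, rfl⟩; simpa using ha
    · intro h; exact ⟨φ z, h, by simp⟩
  have hcomp' : IsCompact C' := by
    rw [← himg]; exact hcomp.image φ.symm.continuous
  have hconn' : IsConnected C' := by
    rw [← himg]; exact hconn.image _ φ.symm.continuous.continuousOn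
  have hloc' : ∀ x ∈ C', ∃ U : Set (EuclideanSpace ℝ (Fin m)),
      IsOpen U ∧ x ∈ U ∧ Convex ℝ (C' ∩ U) := by
    intro x hx
    obtain ⟨U, hUo, hUm, hUc⟩ := hloc (φ x) hx
    refine ⟨⇑φ ⁻¹' U, hUo.preimage φ.continuous, hUm, ?_⟩
    have : C' ∩ ⇑φ ⁻¹' U = ⇑φ ⁻¹' (C ∩ U) := by rw [Set.preimage_inter]
    rw [this]
    exact hUc.linear_preimage (φ : EuclideanSpace ℝ (Fin m) →ₗ[ℝ] (Fin m → ℝ))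
  have hconv' : Convex ℝ C' := TN_aux C' hcomp' hconn' hloc'
  have : C = ⇑φ '' C' := by
    rw [hC', Set.image_preimage_eq C φ.surjective]
  rw [this]
  exact hconv'.linear_image (φ : EuclideanSpace ℝ (Fin m) →ₗ[ℝ] (Fin m → ℝ))
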